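/- Let n ≥ 4 and d = n+3. For every pair of nonnegative integers (u,v) with u+v = n−3, the couple (Σ_{2,n,2},(u,v,4)) is non-realizable: no hyperbolic polynomial of degree d realizes it. -/

import Mathlib

open Polynomial Finset

/-- A real polynomial `P` of degree `d` defines the sign pattern `Σ_{m,n,q}`:
reading the coefficients from that of `x^d` down to the constant term, the first
`m` are positive, the next `n` are negative and the last `q` are positive
(in particular all `d+1` coefficients are nonzero), where `m + n + q = d + 1`. -/
def SignPatternMNQ (P : Polynomial ℝ) (d m n q : ℕ) : Prop :=
  m + n + q = d + 1 ∧ 0 < m ∧ 0 < n ∧ 0 < q ∧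
  (∀ k, k ≤ d → (d - k < m ∨ m + n ≤ d - k) → 0 < P.coeff k) ∧
  (∀ k, k ≤ d → (m ≤ d - k ∧ d - k < m + n) → P.coeff k < 0)

/-- The couple `(Σ_{m,n,q}, (u,v,w))` is realizable (in degree `d`): there is a
hyperbolic polynomial `P` of degree `d` defining the sign pattern `Σ_{m,n,q}`,
whose roots are exactly two positive numbers `β < α` together with `d - 2`
negative numbers `-γ i`, all moduli being distinct, such that exactly `u` of
the `γ i` are `< β`, exactly `v` lie in `(β, α)` and exactly `w` are `> α`. -/
def RealizesCouple (d m n q u v w : ℕ) : Prop :=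
  ∃ (P : Polynomial ℝ) (α β : ℝ) (γ : Fin (d - 2) → ℝ),
    P.natDegree = d ∧
    SignPatternMNQ P d m n q ∧
    0 < β ∧ β < α ∧
    StrictMono γ ∧ (∀ i, 0 < γ i) ∧ (∀ i, γ i ≠ β ∧ γ i ≠ α) ∧
    P.roots = (α ::ₘ β ::ₘ Multiset.map (fun i => -γ i) Finset.univ.val) ∧
    (Finset.univ.filter (fun i => γ i < β)).card = u ∧
    (Finset.univ.filter (fun i => β < γ i ∧ γ i < α)).card = v ∧
    (Finset.univ.filter (fun i => α < γ i)).card = w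


set_option maxHeartbeats 1000000
set_option linter.unusedSectionVars false

section AuxLemmas

variable {ι : Type*} [DecidableEq ι]

lemma sum_powersetCard_one (s : Finset ι) (f : ι → ℝ) :
    ∑ t ∈ s.powersetCard 1, ∏ i ∈ t, f i = ∑ i ∈ s, f i := by
  rw [Finset.powersetCard_one]
  rw [Finset.sum_map]
  simp

lemma sum_powersetCard_two (s : Finset ι) (f : ι → ℝ) :
    ∑ t ∈ s.powersetCard 2, ∏ i ∈ t, f i
      = ((∑ i ∈ s, f i)^2 - ∑ i ∈ s, (f i)^2)/2 := by
  induction s using Finset.induction_on with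
  | empty =>
      rw [Finset.powersetCard_eq_empty.mpr (by simp)]
      simp
  | insert a s hx ih =>
    rw [Finset.powersetCard_succ_insert hx]
    rw [Finset.sum_union]
    · have himg : ∑ t ∈ (s.powersetCard 1).image (insert a), ∏ i ∈ t, f i
          = f a * ∑ i ∈ s, f i := by
        rw [Finset.sum_image]
        · rw [← sum_powersetCard_one s f, Finset.mul_sum]
          refine Finset.sum_congr rfl fun t ht => ?_
          rw [Finset.mem_powersetCard] at ht
          rw [Finset.prod_insert (fun hc => hx (ht.1 hc))]
        · intro t1 h1 t2 h2 heq
          rw [Finset.mem_coe, Finset.mem_powersetCard] at h1 h2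
          have e1 : t1 = (insert a t1).erase a :=
            (Finset.erase_insert (fun hc => hx (h1.1 hc))).symm
          have e2 : t2 = (insert a t2).erase a :=
            (Finset.erase_insert (fun hc => hx (h2.1 hc))).symm
          rw [e1, e2, heq]
      rw [himg, ih, Finset.sum_insert hx, Finset.sum_insert hx]
      ring
    · rw [Finset.disjoint_left]
      intro t ht hti
      rw [Finset.mem_powersetCard] at ht
      rw [Finset.mem_image] at hti
      obtain ⟨u, hu, rfl⟩ := hti
      exact hx (ht.1 (Finset.mem_insert_self a u))

lemma sum_powersetCard_compl (s : Finset ι) (f : ι → ℝ)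
    (hf : ∀ i ∈ s, f i ≠ 0) (k : ℕ) (hk : k ≤ s.card) :
    ∑ t ∈ s.powersetCard (s.card - k), ∏ i ∈ t, f i
      = (∏ i ∈ s, f i) * ∑ t ∈ s.powersetCard k, ∏ i ∈ t, (f i)⁻¹ := by
  rw [Finset.mul_sum]
  refine Finset.sum_nbij' (fun t => s \ t) (fun t => s \ t) ?_ ?_ ?_ ?_ ?_
  · intro t ht
    rw [Finset.mem_powersetCard] at ht ⊢
    refine ⟨Finset.sdiff_subset, ?_⟩
    rw [Finset.card_sdiff_of_subset ht.1, ht.2]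
    omega
  · intro t ht
    rw [Finset.mem_powersetCard] at ht ⊢
    refine ⟨Finset.sdiff_subset, ?_⟩
    rw [Finset.card_sdiff_of_subset ht.1, ht.2]
  · intro t ht
    rw [Finset.mem_powersetCard] at ht
    exact Finset.sdiff_sdiff_eq_self ht.1
  · intro t ht
    rw [Finset.mem_powersetCard] at ht
    exact Finset.sdiff_sdiff_eq_self ht.1
  · intro t ht
    rw [Finset.mem_powersetCard] at ht
    have hsub := ht.1
    have hne : ∏ i ∈ s \ t, f i ≠ 0 :=
      Finset.prod_ne_zero_iff.mpr fun i hi => hf i (Finset.mem_sdiff.mp hi).1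
    have hsplit : (∏ i ∈ s \ t, f i) * ∏ i ∈ t, f i = ∏ i ∈ s, f i :=
      Finset.prod_sdiff hsub
    rw [Finset.prod_inv_distrib]
    field_simp
    linarith [hsplit]

lemma sum_sq_lt_sq_sum {s : Finset ι} (g : ι → ℝ) (hpos : ∀ i ∈ s, 0 < g i)
    (h2 : 2 ≤ s.card) : ∑ i ∈ s, (g i)^2 < (∑ i ∈ s, g i)^2 := by
  have h1 : 1 < s.card := by omega
  obtain ⟨a, ha, b, hb, hab⟩ := Finset.one_lt_card.mp h1
  have hle : ∀ i ∈ s, g i ≤ ∑ j ∈ s, g j :=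
    fun i hi => Finset.single_le_sum (fun j hj => (hpos j hj).le) hi
  have hpair : g a + g b ≤ ∑ j ∈ s, g j := by
    have hsub : ({a, b} : Finset ι) ⊆ s := by
      intro i hi
      rcases Finset.mem_insert.mp hi with rfl | hi
      · exact ha
      · rw [Finset.mem_singleton] at hi; exact hi ▸ hb
    calc g a + g b = ∑ j ∈ ({a, b} : Finset ι), g j := (Finset.sum_pair hab).symm
      _ ≤ ∑ j ∈ s, g j :=
        Finset.sum_le_sum_of_subset_of_nonneg hsub fun j hj _ => (hpos j hj).le
  have hstrict : g a * g a < g a * (∑ j ∈ s, g j) := by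
    apply mul_lt_mul_of_pos_left _ (hpos a ha)
    linarith [hpos b hb]
  calc ∑ i ∈ s, (g i)^2 < ∑ i ∈ s, g i * (∑ j ∈ s, g j) := by
        apply Finset.sum_lt_sum
        · intro i hi
          have := hpos i hi
          nlinarith [hle i hi]
        · exact ⟨a, ha, by nlinarith⟩
    _ = (∑ i ∈ s, g i)^2 := by rw [← Finset.sum_mul]; ring

lemma sum_sq_le_sq_sum {s : Finset ι} (g : ι → ℝ) (hpos : ∀ i ∈ s, 0 ≤ g i) :
    ∑ i ∈ s, (g i)^2 ≤ (∑ i ∈ s, g i)^2 := by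
  have hle : ∀ i ∈ s, g i ≤ ∑ j ∈ s, g j :=
    fun i hi => Finset.single_le_sum (fun j hj => hpos j hj) hi
  calc ∑ i ∈ s, (g i)^2 ≤ ∑ i ∈ s, g i * (∑ j ∈ s, g j) := by
        apply Finset.sum_le_sum
        intro i hi
        have := hpos i hi
        nlinarith [hle i hi]
    _ = (∑ i ∈ s, g i)^2 := by rw [← Finset.sum_mul]; ring

lemma card_sq_le_sum_mul_sum_inv (s : Finset ι) (g : ι → ℝ)
    (hpos : ∀ i ∈ s, 0 < g i) :
    (s.card : ℝ)^2 ≤ (∑ i ∈ s, g i) * (∑ i ∈ s, (g i)⁻¹) := by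
  have h := Finset.sum_mul_sq_le_sq_mul_sq s (fun i => Real.sqrt (g i))
      (fun i => Real.sqrt (g i)⁻¹)
  have h1 : ∑ i ∈ s, Real.sqrt (g i) * Real.sqrt (g i)⁻¹ = (s.card : ℝ) := by
    have hone : ∀ i ∈ s, Real.sqrt (g i) * Real.sqrt (g i)⁻¹ = 1 := fun i hi => by
      rw [← Real.sqrt_mul (hpos i hi).le, mul_inv_cancel₀ (hpos i hi).ne', Real.sqrt_one]
    rw [Finset.sum_congr rfl hone, Finset.sum_const, nsmul_eq_mul, mul_one]
  have h2 : ∑ i ∈ s, (Real.sqrt (g i))^2 = ∑ i ∈ s, g i :=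
    Finset.sum_congr rfl fun i hi => Real.sq_sqrt (hpos i hi).le
  have h3 : ∑ i ∈ s, (Real.sqrt (g i)⁻¹)^2 = ∑ i ∈ s, (g i)⁻¹ :=
    Finset.sum_congr rfl fun i hi => Real.sq_sqrt (inv_nonneg.mpr (hpos i hi).le)
  rw [h1, h2, h3] at h
  exact h



/-- Core contradiction, case of a single small modulus (m = 1). -/
lemma core_real_one (b E x T e2B e2hB : ℝ)
    (hb : 0 < b) (hb1 : b < 1) (hE : 4 < E) (hT : T < 4) (hT0 : 0 < T)
    (hET : 16 ≤ E * T) (hx : 0 < x)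
    (he2B : 3 * E - 6 < e2B) (he2hB : 3 * T - 6 < e2hB)
    (hI : e2B + E * x < (1 + b) * (E + x) - b)
    (hII : b * (e2hB + T * x⁻¹) + 1 < (1 + b) * (T + x⁻¹)) : False := by
  set Y := x⁻¹ with hYdef
  have hY : 0 < Y := by positivity
  have hxY : x * Y = 1 := mul_inv_cancel₀ hx.ne'
  have key1 : (2 - b) * E - 6 + b + x * (E - 1 - b) < 0 := by linarith [hI, he2B]
  have hp1 : 0 < (2 - b) * (E - 4) := mul_pos (by linarith) (by linarith)
  have hp2 : 0 < x * (E - 1 - b) := mul_pos hx (by linarith)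
  have hp3 : 0 < x * (E - 4) := mul_pos hx (by linarith)
  have hb23 : 2 / 3 < b := by linarith [key1, hp1, hp2]
  have hE6 : (2 - b) * E < 6 - b := by linarith [key1, hp2]
  have hxU : x * (3 - b) < 3 * b - 2 := by linarith [key1, hp1, hp3]
  have hT0b : 16 * (2 - b) < (6 - b) * T := by
    have hmul := mul_lt_mul_of_pos_right hE6 hT0
    have hmul2 := mul_le_mul_of_nonneg_right hET (show (0:ℝ) ≤ 2 - b by linarith)
    linarith [hmul, hmul2]
  have h3 : (1 + b) * (6 - b) < 16 * b * (2 - b) := by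
    linarith [mul_pos (show (0:ℝ) < 3 * b - 2 by linarith)
      (show (0:ℝ) < 1 - b by linarith), hb]
  have hTlb : 0 < b * T - 1 - b := by
    have hp := mul_lt_mul_of_pos_left hT0b hb
    by_contra hc
    push_neg at hc
    have hnp : (6 - b) * (b * T - 1 - b) ≤ 0 :=
      mul_nonpos_of_nonneg_of_nonpos (by linarith) hc
    linarith [hp, h3, hnp]
  have hY1 : Y * (b * T - 1 - b) < T * (1 - 2 * b) + 6 * b - 1 := by
    linarith [hII, mul_lt_mul_of_pos_left he2hB hb]
  have hY2 : 3 - b < (3 * b - 2) * Y := by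
    calc 3 - b = (x * Y) * (3 - b) := by rw [hxY]; ring
      _ = (x * (3 - b)) * Y := by ring
      _ < (3 * b - 2) * Y := mul_lt_mul_of_pos_right hxU hY
  have h4 : (3 - b) * (b * T - 1 - b) < (3 * b - 2) * (T * (1 - 2 * b) + 6 * b - 1) := by
    calc (3 - b) * (b * T - 1 - b) < ((3 * b - 2) * Y) * (b * T - 1 - b) :=
          mul_lt_mul_of_pos_right hY2 hTlb
      _ = (3 * b - 2) * (Y * (b * T - 1 - b)) := by ring
      _ < (3 * b - 2) * (T * (1 - 2 * b) + 6 * b - 1) := by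
          apply mul_lt_mul_of_pos_left hY1 (by linarith)
  have h1 : (5 * b ^ 2 - 4 * b + 2) * T < 17 * b ^ 2 - 13 * b + 5 := by linarith [h4]
  have hquad : 0 < 5 * b ^ 2 - 4 * b + 2 := by linarith [sq_nonneg (5 * b - 2)]
  have h2 : 16 * (2 - b) * (5 * b ^ 2 - 4 * b + 2) < (17 * b ^ 2 - 13 * b + 5) * (6 - b) := by
    linarith [mul_lt_mul_of_pos_left h1 (show (0:ℝ) < 6 - b by linarith),
      mul_lt_mul_of_pos_right hT0b hquad]
  have hcube : 0 < (1 - b) * (63 * b ^ 2 - 46 * b + 31) := by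
    apply mul_pos (by linarith)
    linarith [sq_nonneg (63 * b - 23)]
  linarith [h2, hcube]

/-- Core contradiction, case of at least two small moduli (m ≥ 2). -/
lemma core_real_two (b E S1 T Y M e2B e2S e2hB e2hS : ℝ)
    (hb : 0 < b) (hb1 : b < 1) (hM : 2 ≤ M)
    (hE : 4 < E) (hT : T < 4) (hT0 : 0 < T) (hET : 16 ≤ E * T)
    (hS1 : 0 < S1) (hY : 0 < Y) (hSY : M ^ 2 ≤ S1 * Y)
    (he2B : 3 * E - 6 < e2B) (he2S : 0 ≤ e2S)
    (he2hB : 3 * T - 6 < e2hB) (he2hS : (M - 1) * Y - M * (M - 1) / 2 < e2hS)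
    (hI : e2B + e2S + E * S1 < (1 + b) * (E + S1) - b)
    (hII : b * (e2hB + e2hS + T * Y) + 1 < (1 + b) * (T + Y)) : False := by
  have key1 : (2 - b) * E - 6 + b + S1 * (E - 1 - b) < 0 := by linarith [hI, he2B, he2S]
  have hp1 : 0 < (2 - b) * (E - 4) := mul_pos (by linarith) (by linarith)
  have hp2 : 0 < S1 * (E - 1 - b) := mul_pos hS1 (by linarith)
  have hp3 : 0 < S1 * (E - 4) := mul_pos hS1 (by linarith)
  have hb23 : 2 / 3 < b := by linarith [key1, hp1, hp2]
  have hE6 : (2 - b) * E < 6 - b := by linarith [key1, hp2]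
  have hE5 : E < 5 := by
    by_contra hc
    push_neg at hc
    have : 0 ≤ (2 - b) * (E - 5) := mul_nonneg (by linarith) (by linarith)
    linarith [hE6, this]
  have hT165 : 16 / 5 < T := by
    have h5T := mul_lt_mul_of_pos_right hE5 hT0
    linarith [hET, h5T]
  have hS1U : S1 * (3 - b) < 3 * b - 2 := by linarith [key1, hp1, hp3]
  have hS1half : S1 < 1 / 2 := by
    linarith [hS1U, mul_pos hS1 (show (0:ℝ) < 1 - b by linarith)]
  have hYM : 2 * M ^ 2 < Y := by
    have hhalf := mul_lt_mul_of_pos_right hS1half hY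
    linarith [hSY, hhalf]
  have hmain : Y * (b * (T + M - 2) - 1)
      < T * (1 - 2 * b) + 6 * b - 1 + b * M * (M - 1) / 2 := by
    linarith [hII, mul_lt_mul_of_pos_left he2hS hb, mul_lt_mul_of_pos_left he2hB hb]
  have hTM2 : (0:ℝ) < T + M - 2 := by linarith
  have hcoef : 2 * M / 3 - 1 / 5 < b * (T + M - 2) - 1 := by
    have hbT := mul_lt_mul_of_pos_right hb23 hTM2
    linarith [hbT, hT165, mul_pos (show (0:ℝ) < 2/3 by norm_num) hTM2]
  have hrhs : T * (1 - 2 * b) + 6 * b - 1 + b * M * (M - 1) / 2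
      < 11 / 5 + M * (M - 1) / 2 := by
    have p1 : 0 < (2 * b - 1) * (T - 16 / 5) := mul_pos (by linarith) (by linarith)
    have p2 : 0 < (1 - b) * (M * (M - 1)) := by
      apply mul_pos (by linarith)
      nlinarith [hM]
    linarith [p1, p2]
  have hchain : Y * (2 * M / 3 - 1 / 5) < 11 / 5 + M * (M - 1) / 2 := by
    have h5 : Y * (2 * M / 3 - 1 / 5) ≤ Y * (b * (T + M - 2) - 1) :=
      mul_le_mul_of_nonneg_left hcoef.le hY.le
    linarith [hmain, hrhs, h5]
  have hfin := mul_lt_mul_of_pos_right hYM (show (0:ℝ) < 2 * M / 3 - 1 / 5 by linarith)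
  linarith [hfin, hchain, hM, mul_nonneg (sq_nonneg M) (sub_nonneg.mpr hM), sq_nonneg (M - 2)]

variable {ι : Type*} [DecidableEq ι]

lemma sum_sub_one {s : Finset ι} (z : ι → ℝ) :
    ∑ i ∈ s, (z i - 1) = (∑ i ∈ s, z i) - (s.card : ℝ) := by
  rw [Finset.sum_sub_distrib, Finset.sum_const, nsmul_eq_mul, mul_one]

lemma sum_sub_one_sq {s : Finset ι} (z : ι → ℝ) :
    ∑ i ∈ s, (z i - 1)^2 = (∑ i ∈ s, (z i)^2) - 2*(∑ i ∈ s, z i) + (s.card : ℝ) := by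
  have h : ∀ i ∈ s, (z i - 1)^2 = (z i)^2 - 2*(z i) + 1 := fun i _ => by ring
  rw [Finset.sum_congr rfl h, Finset.sum_add_distrib, Finset.sum_sub_distrib,
    ← Finset.mul_sum, Finset.sum_const, nsmul_eq_mul, mul_one]

lemma core_finset (Bs Ss : Finset ι) (F : ι → ℝ) (b : ℝ)
    (hb : 0 < b) (hb1 : b < 1)
    (hdisj : Disjoint Bs Ss) (hBcard : Bs.card = 4) (hScard : 1 ≤ Ss.card)
    (hFB : ∀ i ∈ Bs, 1 < F i) (hFS : ∀ i ∈ Ss, 0 < F i ∧ F i < 1)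
    (hI : ((∑ i ∈ Bs ∪ Ss, F i)^2 - ∑ i ∈ Bs ∪ Ss, (F i)^2)/2
          < (1+b) * (∑ i ∈ Bs ∪ Ss, F i) - b)
    (hII : b * (((∑ i ∈ Bs ∪ Ss, (F i)⁻¹)^2 - ∑ i ∈ Bs ∪ Ss, ((F i)⁻¹)^2)/2) + 1
          < (1+b) * (∑ i ∈ Bs ∪ Ss, (F i)⁻¹)) : False := by
  have hBne : Bs.Nonempty := Finset.card_pos.mp (by omega)
  have hSne : Ss.Nonempty := Finset.card_pos.mp (by omega)
  have hFB0 : ∀ i ∈ Bs, 0 < F i := fun i hi => lt_trans one_pos (hFB i hi)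
  have hFBinv : ∀ i ∈ Bs, (F i)⁻¹ < 1 := fun i hi => by
    rw [← one_div]; exact (div_lt_one (hFB0 i hi)).mpr (hFB i hi)
  have hFSinv : ∀ i ∈ Ss, 1 < (F i)⁻¹ := fun i hi => by
    rw [← one_div]; exact (one_lt_div (hFS i hi).1).mpr (hFS i hi).2
  rw [Finset.sum_union hdisj, Finset.sum_union hdisj] at hI
  rw [Finset.sum_union hdisj, Finset.sum_union hdisj] at hII
  set E := ∑ i ∈ Bs, F i with hEdef
  set S1 := ∑ i ∈ Ss, F i with hS1def
  set QB := ∑ i ∈ Bs, (F i)^2 with hQBdef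
  set QS := ∑ i ∈ Ss, (F i)^2 with hQSdef
  set T := ∑ i ∈ Bs, (F i)⁻¹ with hTdef
  set Y := ∑ i ∈ Ss, (F i)⁻¹ with hYdef
  set RB := ∑ i ∈ Bs, ((F i)⁻¹)^2 with hRBdef
  set RS := ∑ i ∈ Ss, ((F i)⁻¹)^2 with hRSdef
  have hE4 : 4 < E := by
    have h := Finset.sum_lt_sum_of_nonempty hBne hFB
    rw [Finset.sum_const, hBcard] at h
    rw [hEdef]
    simpa using h
  have hT4 : T < 4 := by
    have h := Finset.sum_lt_sum_of_nonempty hBne hFBinv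
    rw [Finset.sum_const, hBcard] at h
    rw [hTdef]
    simpa using h
  have hT0 : 0 < T := by
    rw [hTdef]
    exact Finset.sum_pos (fun i hi => inv_pos.mpr (hFB0 i hi)) hBne
  have hS1pos : 0 < S1 := by
    rw [hS1def]
    exact Finset.sum_pos (fun i hi => (hFS i hi).1) hSne
  have hYpos : 0 < Y := by
    rw [hYdef]
    exact Finset.sum_pos (fun i hi => lt_trans one_pos (hFSinv i hi)) hSne
  have hET : 16 ≤ E * T := by
    have h := card_sq_le_sum_mul_sum_inv Bs F hFB0
    rw [hBcard, ← hEdef, ← hTdef] at h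
    norm_num at h
    exact h
  have hshiftB := sum_sub_one_sq (s := Bs) F
  rw [← hEdef, ← hQBdef, hBcard] at hshiftB
  have hsumB := sum_sub_one (s := Bs) F
  rw [← hEdef, hBcard] at hsumB
  push_cast at hshiftB hsumB
  have he2B : 3*E - 6 < (E^2 - QB)/2 := by
    have h := sum_sq_lt_sq_sum (fun i => F i - 1)
      (fun i hi => by show (0:ℝ) < F i - 1; linarith [hFB i hi]) (by omega)
    rw [hshiftB, hsumB] at h
    nlinarith [h]
  have hshifthB := sum_sub_one_sq (s := Bs) (fun i => (F i)⁻¹)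
  rw [← hTdef, ← hRBdef, hBcard] at hshifthB
  have hsumhB := sum_sub_one (s := Bs) (fun i => (F i)⁻¹)
  rw [← hTdef, hBcard] at hsumhB
  push_cast at hshifthB hsumhB
  have he2hB : 3*T - 6 < (T^2 - RB)/2 := by
    have h := sum_sq_lt_sq_sum (fun i => 1 - (F i)⁻¹)
      (fun i hi => by show (0:ℝ) < 1 - (F i)⁻¹; linarith [hFBinv i hi]) (by omega)
    have hflip : ∑ i ∈ Bs, (1 - (F i)⁻¹)^2 = ∑ i ∈ Bs, ((F i)⁻¹ - 1)^2 :=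
      Finset.sum_congr rfl (fun i _ => by ring)
    have hflip2 : ∑ i ∈ Bs, (1 - (F i)⁻¹) = - ∑ i ∈ Bs, ((F i)⁻¹ - 1) := by
      rw [← Finset.sum_neg_distrib]
      exact Finset.sum_congr rfl (fun i _ => by ring)
    rw [hflip, hflip2, hshifthB, hsumhB] at h
    nlinarith [h]
  rcases eq_or_lt_of_le hScard with hm1 | hm2
  · -- m = 1
    obtain ⟨j, hj⟩ := Finset.card_eq_one.mp hm1.symm
    have hS1x : S1 = F j := by rw [hS1def, hj, Finset.sum_singleton]
    have hQSx : QS = (F j)^2 := by rw [hQSdef, hj, Finset.sum_singleton]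
    have hYx : Y = (F j)⁻¹ := by rw [hYdef, hj, Finset.sum_singleton]
    have hRSx : RS = ((F j)⁻¹)^2 := by rw [hRSdef, hj, Finset.sum_singleton]
    have hjS : j ∈ Ss := by rw [hj]; exact Finset.mem_singleton_self j
    have hx : 0 < F j := (hFS j hjS).1
    refine core_real_one b E (F j) T ((E^2 - QB)/2) ((T^2 - RB)/2)
      hb hb1 hE4 hT4 hT0 hET hx he2B he2hB ?_ ?_
    · rw [hS1x, hQSx] at hI
      nlinarith [hI]
    · rw [hYx, hRSx] at hII
      nlinarith [hII]
  · -- m ≥ 2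
    set M : ℝ := (Ss.card : ℝ) with hMdef
    have hM2 : 2 ≤ M := by
      rw [hMdef]
      exact_mod_cast hm2
    have hSY : M^2 ≤ S1 * Y := by
      have h := card_sq_le_sum_mul_sum_inv Ss F (fun i hi => (hFS i hi).1)
      rw [← hS1def, ← hYdef, ← hMdef] at h
      exact h
    have he2S : 0 ≤ (S1^2 - QS)/2 := by
      have h := sum_sq_le_sq_sum F (fun i hi => (hFS i hi).1.le)
      rw [← hQSdef, ← hS1def] at h
      linarith
    have hshifthS := sum_sub_one_sq (s := Ss) (fun i => (F i)⁻¹)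
    rw [← hYdef, ← hRSdef, ← hMdef] at hshifthS
    have hsumhS := sum_sub_one (s := Ss) (fun i => (F i)⁻¹)
    rw [← hYdef, ← hMdef] at hsumhS
    have he2hS : (M - 1)*Y - M*(M-1)/2 < (Y^2 - RS)/2 := by
      have h := sum_sq_lt_sq_sum (fun i => (F i)⁻¹ - 1)
        (fun i hi => by show (0:ℝ) < (F i)⁻¹ - 1; linarith [hFSinv i hi]) hm2
      rw [hshifthS, hsumhS] at h
      nlinarith [h]
    refine core_real_two b E S1 T Y M ((E^2 - QB)/2) ((S1^2 - QS)/2)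
      ((T^2 - RB)/2) ((Y^2 - RS)/2) hb hb1 hM2 hE4 hT4 hT0 hET hS1pos hYpos hSY
      he2B he2S he2hB he2hS ?_ ?_
    · nlinarith [hI]
    · nlinarith [hII]

end AuxLemmas

/-- Proposition 4 (1): for `n ≥ 4` and `d = n + 3`, every couple
`(Σ_{2,n,2}, (u,v,4))` with `u + v = n - 3` is non-realizable. -/
theorem stmt7 (n u v : ℕ) (hn : 4 ≤ n) (huv : u + v = n - 3) :
    ¬ RealizesCouple (n + 3) 2 n 2 u v 4 := by
  obtain ⟨k, rfl⟩ : ∃ k, n = k + 4 := ⟨n - 4, by omega⟩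
  rintro ⟨P, α, β, γ, hdeg, hsgn, hβ0, hβα, -, hγpos, hγne, hroots, -, -, hw⟩
  obtain ⟨-, -, -, -, hpos, hneg⟩ := hsgn
  have hα0 : 0 < α := lt_trans hβ0 hβα
  -- coefficient signs
  have hlc : 0 < P.coeff (k + 4 + 3) := hpos (k + 4 + 3) le_rfl (by left; omega)
  have hc2 : P.coeff 2 < 0 := hneg 2 (by omega) (by constructor <;> omega)
  have hcn1 : P.coeff (k + 5) < 0 := hneg (k + 5) (by omega) (by constructor <;> omega)
  -- cardinalities
  have hucard : (Finset.univ : Finset (Fin (k + 4 + 3 - 2))).card = k + 5 := by simp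
  -- roots and splitting
  have hrc : Multiset.card P.roots = P.natDegree := by
    rw [hroots, hdeg]
    simp only [Multiset.card_cons, Multiset.card_map]
    have : Multiset.card (Finset.univ : Finset (Fin (k + 4 + 3 - 2))).val = k + 5 := hucard
    omega
  have hsp : P.Splits := (Polynomial.splits_iff_card_roots).mpr hrc
  have hfac := (Polynomial.C_leadingCoeff_mul_prod_multiset_X_sub_C hrc).symm
  rw [hroots] at hfac
  simp only [Multiset.map_cons, Multiset.prod_cons, Multiset.map_map] at hfac
  set Q : Polynomial ℝ := ∏ i, (X + C (γ i)) with hQdef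
  have hQeq : (Multiset.map ((fun a => X - C a) ∘ fun i => -γ i)
      (Finset.univ : Finset (Fin (k + 4 + 3 - 2))).val).prod = Q := by
    rw [hQdef, Finset.prod_eq_multiset_prod]
    congr 1
    apply Multiset.map_congr rfl
    intro i _
    simp [sub_neg_eq_add]
  rw [hQeq] at hfac
  set lc := P.leadingCoeff with hlcdef
  have hlcpos : 0 < lc := by
    have : lc = P.coeff (k + 4 + 3) := by rw [hlcdef, Polynomial.leadingCoeff, hdeg]
    rw [this]; exact hlc
  have hPform : P = C lc * (Q * X ^ 2) - C (lc * (α + β)) * (Q * X ^ 1)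
      + C (lc * (α * β)) * Q := by
    rw [hfac]
    simp only [C_mul, C_add]
    ring
  have hcoeff : ∀ j : ℕ, P.coeff (j + 2)
      = lc * Q.coeff j - lc * (α + β) * Q.coeff (j + 1) + lc * (α * β) * Q.coeff (j + 2) := by
    intro j
    rw [hPform]
    simp only [coeff_add, coeff_sub, coeff_C_mul, Polynomial.coeff_mul_X_pow']
    norm_num
  -- Vieta for Q
  have hQc : ∀ j : ℕ, j ≤ k + 5 → Q.coeff j
      = ∑ t ∈ Finset.univ.powersetCard (k + 5 - j), ∏ i ∈ t, γ i := by
    intro j hj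
    rw [hQdef]
    have hle : j ≤ (Finset.univ : Finset (Fin (k + 4 + 3 - 2))).card := by
      rw [hucard]; exact hj
    have h := Finset.prod_X_add_C_coeff Finset.univ γ hle
    rw [hucard] at h
    exact h
  -- symmetric function abbreviations
  set S : ℝ := ∑ i, γ i with hSdef
  set Qs : ℝ := ∑ i, (γ i)^2 with hQsdef
  set P1 : ℝ := ∑ i, (γ i)⁻¹ with hP1def
  set P2 : ℝ := ∑ i, ((γ i)⁻¹)^2 with hP2def
  set Pr : ℝ := ∏ i, γ i with hPrdef
  have hPr : 0 < Pr := Finset.prod_pos (fun i _ => hγpos i)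
  have hγne0 : ∀ i ∈ (Finset.univ : Finset (Fin (k + 4 + 3 - 2))), γ i ≠ 0 :=
    fun i _ => (hγpos i).ne'
  -- the coefficient of degree k+5 : condition (I)
  have hQk3 : Q.coeff (k + 3) = (S^2 - Qs)/2 := by
    rw [hQc (k + 3) (by omega), show k + 5 - (k + 3) = 2 by omega,
      sum_powersetCard_two, hSdef, hQsdef]
  have hQk4 : Q.coeff (k + 4) = S := by
    rw [hQc (k + 4) (by omega), show k + 5 - (k + 4) = 1 by omega,
      sum_powersetCard_one, hSdef]
  have hQk5 : Q.coeff (k + 5) = 1 := by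
    rw [hQc (k + 5) le_rfl, show k + 5 - (k + 5) = 0 by omega]
    simp
  have hA := hcoeff (k + 3)
  rw [show k + 3 + 2 = k + 5 by omega, show k + 3 + 1 = k + 4 by omega,
    hQk3, hQk4, hQk5] at hA
  have hWI : lc * ((S^2 - Qs)/2 - (α + β)*S + α*β) < 0 := by
    have : lc * ((S^2 - Qs)/2 - (α + β)*S + α*β) = P.coeff (k + 5) := by
      rw [hA]; ring
    rw [this]; exact hcn1
  have hIraw : (S^2 - Qs)/2 - (α + β)*S + α*β < 0 := by
    by_contra h
    push_neg at h
    nlinarith [mul_nonneg hlcpos.le h]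
  -- the coefficient of degree 2 : condition (II)
  have hcompl : ∀ j : ℕ, j ≤ k + 5 →
      ∑ t ∈ Finset.univ.powersetCard (k + 5 - j), ∏ i ∈ t, γ i
        = Pr * ∑ t ∈ Finset.univ.powersetCard j, ∏ i ∈ t, (γ i)⁻¹ := by
    intro j hj
    have h := sum_powersetCard_compl Finset.univ γ hγne0 j (by rw [hucard]; exact hj)
    rw [hucard] at h
    rw [h, hPrdef]
  have hQ0 : Q.coeff 0 = Pr := by
    rw [hQc 0 (by omega), show k + 5 - 0 = k + 5 by omega,
      show k + 5 = k + 5 - 0 by omega, hcompl 0 (by omega)]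
    simp
  have hQ1 : Q.coeff 1 = Pr * P1 := by
    rw [hQc 1 (by omega), show k + 5 - 1 = k + 5 - 1 by omega, hcompl 1 (by omega),
      sum_powersetCard_one, hP1def]
  have hQ2 : Q.coeff 2 = Pr * ((P1^2 - P2)/2) := by
    rw [hQc 2 (by omega), hcompl 2 (by omega), sum_powersetCard_two, hP1def, hP2def]
  have hB := hcoeff 0
  norm_num at hB
  rw [hQ0, hQ1, hQ2] at hB
  have hWII : (lc * Pr) * (1 - (α + β)*P1 + α*β*((P1^2 - P2)/2)) < 0 := by
    have : (lc * Pr) * (1 - (α + β)*P1 + α*β*((P1^2 - P2)/2)) = P.coeff 2 := by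
      rw [hB]; ring
    rw [this]; exact hc2
  have hIIraw : 1 - (α + β)*P1 + α*β*((P1^2 - P2)/2) < 0 := by
    by_contra h
    push_neg at h
    nlinarith [mul_nonneg (mul_pos hlcpos hPr).le h]
  -- the big and small index sets
  set Bs := Finset.univ.filter (fun i => α < γ i) with hBsdef
  set Ss := Finset.univ.filter (fun i => γ i < α) with hSsdef
  have hdisj : Disjoint Bs Ss := by
    rw [Finset.disjoint_left]
    intro i hi1 hi2
    rw [hBsdef, Finset.mem_filter] at hi1
    rw [hSsdef, Finset.mem_filter] at hi2
    linarith [hi1.2, hi2.2]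
  have hBcard : Bs.card = 4 := hw
  have hunion : Bs ∪ Ss = Finset.univ := by
    ext i
    simp only [hBsdef, hSsdef, Finset.mem_union, Finset.mem_filter, Finset.mem_univ,
      true_and, iff_true]
    rcases lt_or_gt_of_ne ((hγne i).2) with h | h
    · right; exact h
    · left; exact h
  have hScard : 1 ≤ Ss.card := by
    have hcu := Finset.card_union_of_disjoint hdisj
    rw [hunion, hucard, hBcard] at hcu
    omega
  -- normalized moduli
  set F : Fin (k + 4 + 3 - 2) → ℝ := fun i => γ i / α with hFdef
  set b : ℝ := β / α with hbdef
  have hb : 0 < b := div_pos hβ0 hα0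
  have hb1 : b < 1 := (div_lt_one hα0).mpr hβα
  have hFB : ∀ i ∈ Bs, 1 < F i := by
    intro i hi
    rw [hBsdef, Finset.mem_filter] at hi
    exact (one_lt_div hα0).mpr hi.2
  have hFS : ∀ i ∈ Ss, 0 < F i ∧ F i < 1 := by
    intro i hi
    rw [hSsdef, Finset.mem_filter] at hi
    exact ⟨div_pos (hγpos i) hα0, (div_lt_one hα0).mpr hi.2⟩
  -- the two normalized inequalities
  have hsF : ∑ i, F i = S / α := by
    rw [hSdef, Finset.sum_div]
  have hsF2 : ∑ i, (F i)^2 = Qs / α^2 := by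
    rw [hQsdef, Finset.sum_div]
    exact Finset.sum_congr rfl fun i _ => (div_pow (γ i) α 2)
  have hsFi : ∑ i, (F i)⁻¹ = α * P1 := by
    rw [hP1def, Finset.mul_sum]
    refine Finset.sum_congr rfl fun i _ => ?_
    rw [hFdef]
    rw [inv_div, div_eq_mul_inv]
  have hsFi2 : ∑ i, ((F i)⁻¹)^2 = α^2 * P2 := by
    rw [hP2def, Finset.mul_sum]
    refine Finset.sum_congr rfl fun i _ => ?_
    rw [hFdef, inv_div, div_eq_mul_inv, mul_pow]
  have hIcore : ((∑ i ∈ Bs ∪ Ss, F i)^2 - ∑ i ∈ Bs ∪ Ss, (F i)^2)/2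
      < (1+b) * (∑ i ∈ Bs ∪ Ss, F i) - b := by
    rw [hunion, hsF, hsF2, hbdef]
    have key : ((S/α)^2 - Qs/α^2)/2 - ((1 + β/α)*(S/α) - β/α)
        = ((S^2 - Qs)/2 - (α + β)*S + α*β)/α^2 := by
      field_simp
      ring
    have hneg2 : ((S^2 - Qs)/2 - (α + β)*S + α*β)/α^2 < 0 :=
      div_neg_of_neg_of_pos (by linarith [hIraw]) (by positivity)
    linarith [key, hneg2]
  have hIIcore : b * (((∑ i ∈ Bs ∪ Ss, (F i)⁻¹)^2 - ∑ i ∈ Bs ∪ Ss, ((F i)⁻¹)^2)/2) + 1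
      < (1+b) * (∑ i ∈ Bs ∪ Ss, (F i)⁻¹) := by
    rw [hunion, hsFi, hsFi2, hbdef]
    have key2 : β/α * (((α*P1)^2 - α^2*P2)/2) + 1 - (1 + β/α)*(α*P1)
        = 1 - (α + β)*P1 + α*β*((P1^2 - P2)/2) := by
      field_simp
      ring
    linarith [key2, hIIraw]
  exact core_finset Bs Ss F b hb hb1 hdisj hBcard hScard hFB hFS hIcore hIIcore
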